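/- Let b, c be nonzero complex numbers and p > 2q > 0 integers with c²/(4b) = p(p-2q)/(p-q)² and c²/(4b) ≠ 1. Define F(t) = (4b - c²)·cosh((q-p)t) - 4b·cosh(qt) + c². Then the fourth derivative of F at 0 is nonzero. -/

import Mathlib

private lemma hd_cosh (k t : ℂ) :
    HasDerivAt (fun t => Complex.cosh (k * t)) (k * Complex.sinh (k * t)) t := by
  have := (Complex.hasDerivAt_cosh (k * t)).comp t ((hasDerivAt_id t).const_mul k)
  simpa [mul_comm, Function.comp_def] using this

private lemma hd_sinh (k t : ℂ) :
    HasDerivAt (fun t => Complex.sinh (k * t)) (k * Complex.cosh (k * t)) t := by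
  have := (Complex.hasDerivAt_sinh (k * t)).comp t ((hasDerivAt_id t).const_mul k)
  simpa [mul_comm, Function.comp_def] using this

theorem stmt_4 (b c : ℂ) (hb : b ≠ 0) (hc : c ≠ 0) (p q : ℕ)
    (hq : 0 < q) (hpq : 2 * q < p)
    (hratio : c ^ 2 / (4 * b) = (p : ℂ) * ((p : ℂ) - 2 * q) / ((p : ℂ) - q) ^ 2)
    (hne : (p : ℂ) * ((p : ℂ) - 2 * q) / ((p : ℂ) - q) ^ 2 ≠ 1)
    (F : ℂ → ℂ)
    (hF : ∀ t : ℂ, F t = (4 * b - c ^ 2) * Complex.cosh (((q : ℂ) - p) * t)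
        - 4 * b * Complex.cosh ((q : ℂ) * t) + c ^ 2) :
    iteratedDeriv 4 F 0 ≠ 0 := by
  set A : ℂ := 4 * b - c ^ 2 with hA
  set k : ℂ := (q : ℂ) - p with hk
  set m : ℂ := (q : ℂ) with hm
  have hFeq : F = fun t => A * Complex.cosh (k * t) - 4 * b * Complex.cosh (m * t) + c ^ 2 :=
    funext hF
  have h1 : deriv F = fun t => A * (k * Complex.sinh (k * t))
      - 4 * b * (m * Complex.sinh (m * t)) := by
    funext t
    rw [hFeq]
    exact ((((hd_cosh k t).const_mul A).sub ((hd_cosh m t).const_mul (4 * b))).add_const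
      (c ^ 2)).deriv
  have h2 : (deriv fun t => A * (k * Complex.sinh (k * t))
      - 4 * b * (m * Complex.sinh (m * t))) = fun t => A * k * (k * Complex.cosh (k * t))
      - 4 * b * m * (m * Complex.cosh (m * t)) := by
    funext t
    have := (((hd_sinh k t).const_mul (A * k)).sub ((hd_sinh m t).const_mul (4 * b * m))).deriv
    rw [← this]
    congr 1
    funext s
    simp only [Pi.sub_apply]
    ring
  have h3 : (deriv fun t => A * k * (k * Complex.cosh (k * t))
      - 4 * b * m * (m * Complex.cosh (m * t))) = fun t => A * k ^ 2 * (k * Complex.sinh (k * t))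
      - 4 * b * m ^ 2 * (m * Complex.sinh (m * t)) := by
    funext t
    have := (((hd_cosh k t).const_mul (A * k ^ 2)).sub
      ((hd_cosh m t).const_mul (4 * b * m ^ 2))).deriv
    rw [← this]
    congr 1
    funext s
    simp only [Pi.sub_apply]
    ring
  have h4 : (deriv fun t => A * k ^ 2 * (k * Complex.sinh (k * t))
      - 4 * b * m ^ 2 * (m * Complex.sinh (m * t))) = fun t =>
      A * k ^ 3 * (k * Complex.cosh (k * t)) - 4 * b * m ^ 3 * (m * Complex.cosh (m * t)) := by
    funext t
    have := (((hd_sinh k t).const_mul (A * k ^ 3)).sub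
      ((hd_sinh m t).const_mul (4 * b * m ^ 3))).deriv
    rw [← this]
    congr 1
    funext s
    simp only [Pi.sub_apply]
    ring
  have hval : iteratedDeriv 4 F 0 = A * k ^ 4 - 4 * b * m ^ 4 := by
    rw [iteratedDeriv_succ', h1, iteratedDeriv_succ', h2, iteratedDeriv_succ', h3,
      iteratedDeriv_succ', h4, iteratedDeriv_zero]
    simp [Complex.cosh_zero]
    ring
  rw [hval]
  -- algebra
  have hPQ : (p : ℂ) - q ≠ 0 := by
    have : (q : ℂ) ≠ (p : ℂ) := by
      exact_mod_cast Nat.ne_of_lt (lt_of_le_of_lt (Nat.le_mul_of_pos_left q (by norm_num)) hpq)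
    intro h; apply this; linear_combination -h
  have hb4 : (4 : ℂ) * b ≠ 0 := by simp [hb]
  have hc2 : c ^ 2 * ((p : ℂ) - q) ^ 2 = 4 * b * ((p : ℂ) * ((p : ℂ) - 2 * q)) := by
    have hr := (div_eq_div_iff hb4 (pow_ne_zero 2 hPQ)).mp hratio
    linear_combination hr
  have hQ : (q : ℂ) ≠ 0 := Nat.cast_ne_zero.mpr hq.ne'
  have hP : (p : ℂ) ≠ 0 := Nat.cast_ne_zero.mpr (by omega)
  have hP2Q : (p : ℂ) - 2 * q ≠ 0 := by
    have : ((2 * q : ℕ) : ℂ) ≠ (p : ℂ) := by exact_mod_cast Nat.ne_of_lt hpq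
    intro h; apply this; push_cast; linear_combination -h
  have key : A * k ^ 4 - 4 * b * m ^ 4 = 4 * b * (q : ℂ) ^ 2 * p * ((p : ℂ) - 2 * q) := by
    rw [hA, hk, hm]
    linear_combination (-(((p : ℂ) - q) ^ 2)) * hc2
  rw [key]
  exact mul_ne_zero (mul_ne_zero (mul_ne_zero hb4 (pow_ne_zero 2 hQ)) hP) hP2Q
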